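/- arXiv:math/9805010 — 2 statements merged into one kernel-verified Lean document; each statement's English description precedes it below -/
import Mathlib

section
/- Saalschütz' summation formula: let m ∈ ℕ and b, c, e ∈ ℂ with e and e − b − c not nonpositive integers. Then ∑_{k=0}^m (−m)_k (b)_k (c)_k / ((e)_k (−m+b+c−e+1)_k · k!) = (e−b)_m (e−c)_m / ((e)_m (e−b−c)_m). -/
open Complex

/-- Pochhammer symbol `(a)_k = a (a+1) ⋯ (a+k-1)`. -/
noncomputable def poch (a : ℂ) (k : ℕ) : ℂ := ∏ i ∈ Finset.range k, (a + i)

lemma poch_zero (a : ℂ) : poch a 0 = 1 := by simp [poch]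

lemma poch_succ (a : ℂ) (k : ℕ) : poch a (k+1) = poch a k * (a + k) := by
  simp [poch, Finset.prod_range_succ]

lemma poch_succ' (a : ℂ) (k : ℕ) : poch a (k+1) = a * poch (a+1) k := by
  rw [poch, Finset.prod_range_succ', poch]
  simp only [Nat.cast_add, Nat.cast_zero, add_zero, Nat.cast_one]
  rw [mul_comm]
  congr 1
  apply Finset.prod_congr rfl
  intro i _
  push_cast
  ring

lemma poch_add (a : ℂ) (m n : ℕ) : poch a (m+n) = poch a m * poch (a+m) n := by
  rw [poch, Finset.prod_range_add, poch, poch]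
  congr 1
  apply Finset.prod_congr rfl
  intro i _
  push_cast
  ring

lemma poch_ne_zero (a : ℂ) (h : ∀ j : ℕ, a ≠ -(j:ℂ)) (k : ℕ) : poch a k ≠ 0 := by
  rw [poch]
  apply Finset.prod_ne_zero_iff.mpr
  intro i _
  intro hz
  exact h i (by linear_combination hz)

lemma poch_reflect (a : ℂ) (k : ℕ) : poch a k = (-1)^k * poch (1 - a - k) k := by
  rw [poch, poch, ← Finset.prod_range_reflect,
    show ((-1:ℂ))^k = ∏ _i ∈ Finset.range k, (-1:ℂ) by simp, ← Finset.prod_mul_distrib]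
  apply Finset.prod_congr rfl
  intro j hj
  rw [Finset.mem_range] at hj
  have h1 : (↑(k - 1 - j) : ℂ) = ↑k - 1 - ↑j := by
    have h2 : k - 1 - j = k - (1 + j) := by omega
    rw [h2, Nat.cast_sub (by omega)]
    push_cast
    ring
  rw [h1]
  ring

lemma fact_poch (n k : ℕ) : (n.factorial : ℂ) * poch ((n:ℂ)+1) k = ((n+k).factorial : ℂ) := by
  induction k with
  | zero => simp [poch_zero]
  | succ k ih =>
    rw [poch_succ, ← mul_assoc, ih, ← Nat.add_assoc, Nat.factorial_succ]
    push_cast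
    ring

noncomputable def WS (m : ℕ) (b c d f : ℂ) : ℂ :=
  ∑ k ∈ Finset.range (m+1),
    (m.choose k : ℂ) * poch b k * poch c k * poch d (m-k) * poch (f+k) (m-k)

lemma binom_split (m : ℕ) (A : ℕ → ℂ) :
    ∑ k ∈ Finset.range (m+2), ((m+1).choose k : ℂ) * A k =
    ∑ k ∈ Finset.range (m+1), (m.choose k : ℂ) * A k
    + ∑ k ∈ Finset.range (m+1), (m.choose k : ℂ) * A (k+1) := by
  rw [Finset.sum_range_succ' (fun k => ((m+1).choose k : ℂ) * A k) (m+1)]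
  simp only [Nat.choose_succ_succ, Nat.choose_zero_right, Nat.cast_add, Nat.cast_one,
    add_mul, one_mul]
  rw [Finset.sum_add_distrib]
  have h1 : ∑ k ∈ Finset.range (m+1), ((m.choose (k+1)) : ℂ) * A (k+1)
      = ∑ k ∈ Finset.range (m+1), ((m.choose k) : ℂ) * A k - A 0 := by
    rw [Finset.sum_range_succ (fun k => ((m.choose (k+1)) : ℂ) * A (k+1)) m,
        Finset.sum_range_succ' (fun k => ((m).choose k : ℂ) * A k) m]
    simp [Nat.choose_succ_self]
  rw [h1]
  ring

lemma WS_rec (m : ℕ) (b c d f : ℂ) :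
    WS (m+1) b c d f
    = (f+m)*(d+b+c-f+m) * WS m b c d f + (f-b)*(f-c) * WS m b c d (f+1) := by
  unfold WS
  have e1 : ∀ k, (m+1).choose k * poch b k * poch c k * poch d (m+1-k) * poch (f+k) (m+1-k)
      = ((m+1).choose k : ℂ) * (poch b k * poch c k * poch d (m+1-k) * poch (f+k) (m+1-k)) := by
    intro k; ring
  simp only [e1]
  rw [binom_split m (fun k => poch b k * poch c k * poch d (m+1-k) * poch (f+k) (m+1-k))]
  rw [Finset.mul_sum, Finset.mul_sum, ← Finset.sum_add_distrib, ← Finset.sum_add_distrib]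
  apply Finset.sum_congr rfl
  intro k hk
  rw [Finset.mem_range] at hk
  obtain ⟨n, rfl⟩ : ∃ n, m = k + n := ⟨m - k, by omega⟩
  have s1 : k + n + 1 - k = n + 1 := by omega
  have s2 : k + n - k = n := by omega
  have s3 : k + n + 1 - (k + 1) = n := by omega
  rw [s1, s2, s3]
  rw [poch_succ d n, poch_succ (f + ↑k) n]
  rw [poch_succ b k, poch_succ c k]
  have a1 : f + ↑(k+1) = (f + 1) + ↑k := by push_cast; ring
  have a2 : f + ↑k + 1 = (f + 1) + ↑k := by ring
  have hR : (f + ↑k) * poch ((f+1) + ↑k) n = poch (f + ↑k) n * (f + ↑k + ↑n) := by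
    rw [← a2, ← poch_succ', ← poch_succ]
  rw [a1]
  push_cast
  linear_combination ((k+n).choose k : ℂ) * poch b k * poch c k * poch d n * ((k:ℂ)+b+c-f) * hR

lemma WS_dagger (m : ℕ) (b c d f : ℂ) :
    (f+m)*(b+c-f) * WS m b c d f + (f-b)*(f-c) * WS m b c d (f+1)
    = b*c * WS m (b+1) (c+1) (d-1) (f+1) := by
  set G : ℕ → ℂ := fun j =>
    (j:ℂ)*((j:ℂ)+f) * (m.choose j : ℂ) * poch b j * poch c j * poch d (m-j)
      * poch ((f+1)+j) (m-j) with hG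
  have key : (f+m)*(b+c-f) * WS m b c d f + (f-b)*(f-c) * WS m b c d (f+1)
      - b*c * WS m (b+1) (c+1) (d-1) (f+1)
      = ∑ k ∈ Finset.range (m+1), (G (k+1) - G k) := by
    unfold WS
    rw [Finset.mul_sum, Finset.mul_sum, Finset.mul_sum, ← Finset.sum_add_distrib,
      ← Finset.sum_sub_distrib]
    apply Finset.sum_congr rfl
    intro k hk
    rw [Finset.mem_range] at hk
    obtain ⟨n, rfl⟩ : ∃ n, m = k + n := ⟨m - k, by omega⟩
    have s2 : k + n - k = n := by omega
    have s3 : k + n - (k + 1) = n - 1 := by omega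
    rw [hG]
    simp only [s2, s3]
    have hb : b * poch (b+1) k = poch b k * (b + k) := by
      rw [← poch_succ', poch_succ]
    have hc : c * poch (c+1) k = poch c k * (c + k) := by
      rw [← poch_succ', poch_succ]
    have hbc : (b * poch (b+1) k) * (c * poch (c+1) k)
        = (poch b k * (b + k)) * (poch c k * (c + k)) := by rw [hb, hc]
    rcases n with _ | j
    · -- n = 0, k = m
      have c0 : (k+0).choose (k+1) = 0 := by
        apply Nat.choose_eq_zero_of_lt; omega
      simp only [Nat.add_zero, Nat.zero_sub, Nat.sub_self, c0, poch_zero, Nat.cast_zero,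
        Nat.choose_self, Nat.cast_one, Nat.choose_succ_self, zero_mul, mul_zero, mul_one]
      push_cast
      linear_combination (-1 : ℂ) * hbc
    · -- n = j + 1
      have s4 : j + 1 - 1 = j := by omega
      rw [s4]
      have a1 : f + 1 + ↑(k+1) = f + 2 + ↑k := by push_cast; ring
      have a2 : (f+1) + ↑k + 1 = f + 2 + ↑k := by ring
      have a3 : f + ↑k + 1 = (f+1) + ↑k := by ring
      have hd : poch d (j+1) = poch d j * (d + j) := poch_succ d j
      have hd1 : poch (d-1) (j+1) = (d-1) * poch d j := by
        rw [poch_succ']; ring_nf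
      have h2 : poch ((f+1) + ↑k) (j+1) = ((f+1)+↑k) * poch (f+2+↑k) j := by
        rw [poch_succ', a2]
      have h1 : (f + ↑k) * poch ((f+1) + ↑k) (j+1)
          = poch (f + ↑k) (j+1) * (f + ↑k + ↑(j+1)) := by
        have t1 := poch_succ' (f+(k:ℂ)) (j+1)
        have t2 := poch_succ (f+(k:ℂ)) (j+1)
        rw [a3] at t1
        rw [t1] at t2
        exact t2
      rw [h2] at h1
      have h3 : ((k:ℂ)+1) * ((k+j+1).choose (k+1) : ℂ)
          = ((j:ℂ)+1) * ((k+j+1).choose k : ℂ) := by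
        have hnat := Nat.choose_succ_right_eq (k+j+1) k
        rw [show k+j+1-k = j+1 by omega] at hnat
        calc ((k:ℂ)+1) * ((k+j+1).choose (k+1) : ℂ)
            = (((k+j+1).choose (k+1) * (k+1) : ℕ) : ℂ) := by push_cast; ring
          _ = (((k+j+1).choose k * (j+1) : ℕ) : ℂ) := by rw [hnat]
          _ = ((j:ℂ)+1) * ((k+j+1).choose k : ℂ) := by push_cast; ring
      rw [hd, hd1, h2, a1]
      rw [poch_succ b k, poch_succ c k]
      have sm : k + (j + 1) = k + j + 1 := by omega
      simp only [sm]
      push_cast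
      push_cast at h1 h3 hbc
      linear_combination
        (-(((k+j+1).choose k : ℂ)) * (d-1) * poch d j * ((f+1+(k:ℂ)) * poch (f+2+(k:ℂ)) j)) * hbc
        + (-(b+c-f) * ((k+j+1).choose k : ℂ) * poch b k * poch c k * poch d j * (d+(j:ℂ))) * h1
        + (-(((k:ℂ)+1)+f) * poch b k * poch c k * (b+(k:ℂ)) * (c+(k:ℂ)) * poch d j * poch (f+2+(k:ℂ)) j) * h3
  have tel : ∑ k ∈ Finset.range (m+1), (G (k+1) - G k) = G (m+1) - G 0 :=
    Finset.sum_range_sub G (m+1)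
  have g0 : G 0 = 0 := by simp [hG]
  have gm : G (m+1) = 0 := by
    simp [hG, Nat.choose_succ_self]
  rw [tel, g0, gm] at key
  linear_combination key

lemma WS_symm (m : ℕ) : ∀ b c d f : ℂ, WS m b c d f = WS m (f-b) (f-c) (d+b+c-f) f := by
  induction m with
  | zero => intro b c d f; simp [WS, poch_zero]
  | succ m ih =>
    intro b c d f
    have r1 := WS_rec m b c d f
    have dag := WS_dagger m b c d f
    have r2 := WS_rec m (f-b) (f-c) (d+b+c-f) f
    have ih1 := ih b c d f
    have ih2 := ih (b+1) (c+1) (d-1) (f+1)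
    have a1 : f + 1 - (b + 1) = f - b := by ring
    have a2 : f + 1 - (c + 1) = f - c := by ring
    have a3 : d - 1 + (b + 1) + (c + 1) - (f + 1) = d + b + c - f := by ring
    rw [a1, a2, a3] at ih2
    have a4 : d + b + c - f + (f - b) + (f - c) - f = d := by ring
    have a5 : f - (f - b) = b := by ring
    have a6 : f - (f - c) = c := by ring
    rw [a4, a5, a6] at r2
    -- from dag: (f-b)(f-c) * WS m b c d (f+1) = b*c*WS m (b+1)(c+1)(d-1)(f+1) - (f+m)(b+c-f)*WS m b c d f
    -- combine
    rw [r1, r2, ih1, ← ih2]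
    linear_combination dag - ((f:ℂ)+m) * (b+c-f) * ih1

lemma WS_zero_d (m : ℕ) (x y f : ℂ) : WS m x y 0 f = poch x m * poch y m := by
  unfold WS
  rw [Finset.sum_range_succ]
  have h0 : ∀ k ∈ Finset.range m,
      (m.choose k : ℂ) * poch x k * poch y k * poch (0:ℂ) (m-k) * poch (f+k) (m-k) = 0 := by
    intro k hk
    rw [Finset.mem_range] at hk
    obtain ⟨n, hn⟩ : ∃ n, m - k = n + 1 := ⟨m - k - 1, by omega⟩
    rw [hn, poch_succ' 0 n]
    simp
  rw [Finset.sum_eq_zero h0]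
  simp [Nat.sub_self, poch_zero]

/-- Saalschütz' summation formula. -/
theorem saalschutz_summation (m : ℕ) (b c e : ℂ)
    (he : ∀ j : ℕ, e ≠ -(j : ℂ)) (hebc : ∀ j : ℕ, e - b - c ≠ -(j : ℂ)) :
    ∑ k ∈ Finset.range (m + 1),
      poch (-(m : ℂ)) k * poch b k * poch c k /
        (poch e k * poch (-(m : ℂ) + b + c - e + 1) k * (Nat.factorial k : ℂ)) =
    poch (e - b) m * poch (e - c) m / (poch e m * poch (e - b - c) m) := by
  have hem : poch e m ≠ 0 := poch_ne_zero e he m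
  have hDm : poch (e - b - c) m ≠ 0 := poch_ne_zero _ hebc m
  have key : ∀ k ∈ Finset.range (m+1),
      poch (-(m : ℂ)) k * poch b k * poch c k /
        (poch e k * poch (-(m : ℂ) + b + c - e + 1) k * (Nat.factorial k : ℂ))
      = ((m.choose k : ℂ) * poch b k * poch c k * poch (e-b-c) (m-k) * poch ((e:ℂ)+k) (m-k))
          / (poch e m * poch (e - b - c) m) := by
    intro k hk
    rw [Finset.mem_range] at hk
    obtain ⟨n, rfl⟩ : ∃ n, m = k + n := ⟨m - k, by omega⟩
    have s2 : k + n - k = n := by omega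
    rw [s2]
    have F1 : poch (-((k+n : ℕ) : ℂ)) k = (-1)^k * poch ((n:ℂ)+1) k := by
      rw [poch_reflect]
      congr 2
      push_cast
      ring
    have F2 : poch (-((k+n : ℕ) : ℂ) + b + c - e + 1) k
        = (-1)^k * poch (e - b - c + (n:ℂ)) k := by
      rw [poch_reflect]
      congr 2
      push_cast
      ring
    have F3 : poch e (k+n) = poch e k * poch (e + (k:ℂ)) n := poch_add e k n
    have F4 : poch (e-b-c) (k+n) = poch (e-b-c) n * poch (e - b - c + (n:ℂ)) k := by
      rw [show k + n = n + k by omega, poch_add]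
    have hA : poch ((n:ℂ)+1) k = (((k+n).choose k : ℂ)) * (Nat.factorial k : ℂ) := by
      have hf := fact_poch n k
      have hc : ((k+n).choose k) * (Nat.factorial k) * (Nat.factorial n) = (k+n).factorial := by
        have := Nat.choose_mul_factorial_mul_factorial (show k ≤ k + n by omega)
        rw [show k + n - k = n by omega] at this
        exact this
      have hn0 : ((Nat.factorial n : ℕ) : ℂ) ≠ 0 := by
        exact_mod_cast Nat.factorial_ne_zero n
      apply mul_left_cancel₀ hn0
      rw [hf, show n + k = k + n by omega, ← hc]
      push_cast
      ring
    have hek : poch e k ≠ 0 := poch_ne_zero e he k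
    have hekn : poch (e + (k:ℂ)) n ≠ 0 := by
      apply poch_ne_zero
      intro j hx
      apply he (k + j)
      push_cast
      linear_combination hx
    have hDn : poch (e-b-c) n ≠ 0 := poch_ne_zero _ hebc n
    have hDk : poch (e - b - c + (n:ℂ)) k ≠ 0 := by
      apply poch_ne_zero
      intro j hx
      apply hebc (n + j)
      push_cast
      linear_combination hx
    have hkf : ((Nat.factorial k : ℕ) : ℂ) ≠ 0 := by
      exact_mod_cast Nat.factorial_ne_zero k
    have hneg : ((-1 : ℂ))^k ≠ 0 := pow_ne_zero k (by norm_num)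
    rw [F1, F2, F3, F4, hA]
    rw [div_eq_div_iff
      (by exact mul_ne_zero (mul_ne_zero hek (mul_ne_zero hneg hDk)) hkf)
      (by exact mul_ne_zero (mul_ne_zero hek hekn) (mul_ne_zero hDn hDk))]
    ring
  rw [Finset.sum_congr rfl key, ← Finset.sum_div]
  have : ∑ k ∈ Finset.range (m+1),
      ((m.choose k : ℂ) * poch b k * poch c k * poch (e-b-c) (m-k) * poch ((e:ℂ)+k) (m-k))
      = WS m b c (e-b-c) e := rfl
  rw [this, WS_symm, show e - b - c + b + c - e = (0:ℂ) by ring, WS_zero_d]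
end

section
/- WZ certificate for Gauss' summation: let a, b, c ∈ ℂ and n, k ∈ ℕ. Define F(n,k) := Γ(a+k) Γ(b+k) Γ(c+n−a) Γ(c+n−b) / (Γ(1+k) Γ(c+n+k) Γ(a) Γ(b) Γ(c+n−a−b)) and G(n,k) := (k/(c+n−a−b)) · F(n,k). Assume that none of a+k, b+k, c+n−a, c+n−b, c+n+1−a, c+n+1−b, c+n+k, c+n+1+k, c+n−a−b, c+n+1−a−b, a, b is a nonpositive integer. Then F(n+1,k) − F(n,k) = G(n,k+1) − G(n,k). -/
open Complex

/-- The WZ pair `F` for Gauss' summation. -/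
noncomputable def Fwz (a b c : ℂ) (n k : ℕ) : ℂ :=
  Complex.Gamma (a + k) * Complex.Gamma (b + k) * Complex.Gamma (c + n - a) *
      Complex.Gamma (c + n - b) /
    (Complex.Gamma (1 + k) * Complex.Gamma (c + n + k) * Complex.Gamma a *
      Complex.Gamma b * Complex.Gamma (c + n - a - b))

/-- The WZ pair `G` for Gauss' summation. -/
noncomputable def Gwz (a b c : ℂ) (n k : ℕ) : ℂ :=
  (k : ℂ) / (c + n - a - b) * Fwz a b c n k

set_option maxHeartbeats 1000000 in
lemma gauss_aux (a b u t A B CA CB G1 GK GA GB GAB : ℂ)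
    (hG1 : G1 ≠ 0) (hGK : GK ≠ 0) (hGA : GA ≠ 0) (hGB : GB ≠ 0) (hGAB : GAB ≠ 0)
    (hut : u + t ≠ 0) (hab : u - a - b ≠ 0) (h1t : 1 + t ≠ 0) :
    A * B * ((u - a) * CA) * ((u - b) * CB) /
        (G1 * ((u + t) * GK) * GA * GB * ((u - a - b) * GAB)) -
      A * B * CA * CB / (G1 * GK * GA * GB * GAB) =
    (t + 1) / (u - a - b) *
        ((a + t) * A * ((b + t) * B) * CA * CB /
          ((1 + t) * G1 * ((u + t) * GK) * GA * GB * GAB)) -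
      t / (u - a - b) * (A * B * CA * CB / (G1 * GK * GA * GB * GAB)) := by
  have hD1 : G1 * ((u + t) * GK) * GA * GB * ((u - a - b) * GAB) ≠ 0 := by
    apply_rules [mul_ne_zero]
  have hD2 : G1 * GK * GA * GB * GAB ≠ 0 := by apply_rules [mul_ne_zero]
  have hD3 : (u - a - b) * ((1 + t) * G1 * ((u + t) * GK) * GA * GB * GAB) ≠ 0 := by
    apply_rules [mul_ne_zero]
  have hD4 : (u - a - b) * (G1 * GK * GA * GB * GAB) ≠ 0 := by
    apply_rules [mul_ne_zero]
  rw [div_mul_div_comm, div_mul_div_comm, div_sub_div _ _ hD1 hD2, div_sub_div _ _ hD3 hD4,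
    div_eq_div_iff (by apply_rules [mul_ne_zero]) (by apply_rules [mul_ne_zero])]
  ring

/-- WZ certificate for Gauss' summation. -/
theorem gauss_WZ (a b c : ℂ) (n k : ℕ)
    (h : ∀ z ∈ [a + k, b + k, c + n - a, c + n - b, c + n + 1 - a, c + n + 1 - b,
        c + n + k, c + n + 1 + k, c + n - a - b, c + n + 1 - a - b, a, b],
      ∀ j : ℕ, z ≠ -(j : ℂ)) :
    Fwz a b c (n + 1) k - Fwz a b c n k = Gwz a b c n (k + 1) - Gwz a b c n k := by
  simp only [List.mem_cons, List.mem_singleton, forall_eq_or_imp, forall_eq] at h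
  obtain ⟨hak, hbk, hcna, hcnb, _, _, hcnk, _, hcnab, _, ha, hb, -⟩ := h
  have gak : Gamma (a + k) ≠ 0 := Complex.Gamma_ne_zero hak
  have gbk : Gamma (b + k) ≠ 0 := Complex.Gamma_ne_zero hbk
  have gcna : Gamma (c + n - a) ≠ 0 := Complex.Gamma_ne_zero hcna
  have gcnb : Gamma (c + n - b) ≠ 0 := Complex.Gamma_ne_zero hcnb
  have gcnk : Gamma (c + n + k) ≠ 0 := Complex.Gamma_ne_zero hcnk
  have gcnab : Gamma (c + n - a - b) ≠ 0 := Complex.Gamma_ne_zero hcnab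
  have ga : Gamma a ≠ 0 := Complex.Gamma_ne_zero ha
  have gb : Gamma b ≠ 0 := Complex.Gamma_ne_zero hb
  have h1kj : ∀ j : ℕ, (1 : ℂ) + k ≠ -j := by
    intro j hc
    have h0 : ((k + 1 + j : ℕ) : ℂ) ≠ 0 := Nat.cast_ne_zero.mpr (by omega)
    exact h0 (by push_cast; linear_combination hc)
  have g1k : Gamma (1 + (k : ℂ)) ≠ 0 := Complex.Gamma_ne_zero h1kj
  have ncnab : c + n - a - b ≠ 0 := by simpa using hcnab 0
  have ncnk : c + n + k ≠ 0 := by simpa using hcnk 0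
  have n1k : (1 : ℂ) + k ≠ 0 := by simpa using h1kj 0
  have e1 : Gamma (c + (n + 1 : ℕ) - a) = (c + n - a) * Gamma (c + n - a) := by
    push_cast
    rw [show c + (n + 1) - a = (c + n - a) + 1 by ring,
      Complex.Gamma_add_one _ (by simpa using hcna 0)]
  have e2 : Gamma (c + (n + 1 : ℕ) - b) = (c + n - b) * Gamma (c + n - b) := by
    push_cast
    rw [show c + (n + 1) - b = (c + n - b) + 1 by ring,
      Complex.Gamma_add_one _ (by simpa using hcnb 0)]
  have e3 : Gamma (c + (n + 1 : ℕ) + k) = (c + n + k) * Gamma (c + n + k) := by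
    push_cast
    rw [show c + (n + 1) + k = (c + n + k) + 1 by ring, Complex.Gamma_add_one _ ncnk]
  have e4 : Gamma (c + (n + 1 : ℕ) - a - b) = (c + n - a - b) * Gamma (c + n - a - b) := by
    push_cast
    rw [show c + (n + 1) - a - b = (c + n - a - b) + 1 by ring,
      Complex.Gamma_add_one _ ncnab]
  have e5 : Gamma (1 + ((k + 1 : ℕ) : ℂ)) = (1 + k) * Gamma (1 + k) := by
    push_cast
    rw [show (1 : ℂ) + (k + 1) = (1 + k) + 1 by ring, Complex.Gamma_add_one _ n1k]
  have e6 : Gamma (c + n + ((k + 1 : ℕ) : ℂ)) = (c + n + k) * Gamma (c + n + k) := by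
    push_cast
    rw [show c + n + ((k : ℂ) + 1) = (c + n + k) + 1 by ring, Complex.Gamma_add_one _ ncnk]
  have e7 : Gamma (a + ((k + 1 : ℕ) : ℂ)) = (a + k) * Gamma (a + k) := by
    push_cast
    rw [show a + ((k : ℂ) + 1) = (a + k) + 1 by ring,
      Complex.Gamma_add_one _ (by simpa using hak 0)]
  have e8 : Gamma (b + ((k + 1 : ℕ) : ℂ)) = (b + k) * Gamma (b + k) := by
    push_cast
    rw [show b + ((k : ℂ) + 1) = (b + k) + 1 by ring,
      Complex.Gamma_add_one _ (by simpa using hbk 0)]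
  have key := gauss_aux a b (c + n) (k : ℂ) (Gamma (a + k)) (Gamma (b + k))
    (Gamma (c + n - a)) (Gamma (c + n - b)) (Gamma (1 + k)) (Gamma (c + n + k))
    (Gamma a) (Gamma b) (Gamma (c + n - a - b)) g1k gcnk ga gb gcnab ncnk ncnab n1k
  simp only [Fwz, Gwz, e1, e2, e3, e4, e5, e6, e7, e8]
  push_cast
  linear_combination key
end
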